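/- For every n × n real matrix A there exist m ∈ ℕ, an m × m purely competitive real matrix B, and an injective linear map T : ℝⁿ → ℝᵐ such that for every differentiable function x : ℝ → ℝⁿ satisfying x'(t) = A·x(t) for all t, the function y(t) := T(x(t)) satisfies y'(t) = B·y(t) for all t. In other words, every solution of a linear dynamical system can be simulated by a purely competitive linear dynamical system via a linear (in particular affine) map. -/

import Mathlib

open Matrix Finset

noncomputable section CompetSim

variable (n : ℕ) (A : Matrix (Fin n) (Fin n) ℝ)

/-- sign of each copy: copies 0,1 carry `+x`, copies 2,3 carry `-x`. -/
def csgn (c : Fin 4) : ℝ := if (c : ℕ) < 2 then 1 else -1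

/-- target copy used to realize a coefficient `v` in row-copy `c`. -/
def ctar (c : Fin 4) (v : ℝ) : Fin 4 :=
  if 0 ≤ v then (if c = 2 then 3 else 2) else (if c = 0 then 1 else 0)

lemma ctar_ne (c : Fin 4) (v : ℝ) : ctar c v ≠ c := by
  unfold ctar
  split_ifs with h1 h2 h3
  · subst h2; decide
  · exact fun h => h2 h.symm
  · subst h3; decide
  · exact fun h => h3 h.symm

lemma csgn_ctar (c : Fin 4) (v : ℝ) : csgn (ctar c v) = if 0 ≤ v then -1 else 1 := by
  unfold ctar
  split_ifs <;> rfl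

lemma key (c : Fin 4) (v : ℝ) : -|v| * csgn (ctar c v) = v := by
  rw [csgn_ctar]
  rcases le_or_gt 0 v with h | h
  · rw [if_pos h, abs_of_nonneg h]; ring
  · rw [if_neg (not_le.mpr h), abs_of_neg h]; ring

end CompetSim

theorem linear_system_simulated_by_purely_competitive
    (n : ℕ) (A : Matrix (Fin n) (Fin n) ℝ) :
    ∃ (m : ℕ) (B : Matrix (Fin m) (Fin m) ℝ)
      (T : (Fin n → ℝ) →ₗ[ℝ] (Fin m → ℝ)),
      (∀ i j : Fin m, i ≠ j → B i j ≤ 0) ∧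
      (∀ i : Fin m, B i i = 0) ∧
      Function.Injective T ∧
      ∀ x : ℝ → (Fin n → ℝ),
        (∀ t : ℝ, HasDerivAt x (A.mulVec (x t)) t) →
        ∀ t : ℝ, HasDerivAt (fun s => T (x s)) (B.mulVec (T (x t))) t := by
  classical
  set e : Fin 4 × Fin n ≃ Fin (4 * n) := finProdFinEquiv with he
  -- the competitive matrix on the product index set
  set B₀ : Matrix (Fin 4 × Fin n) (Fin 4 × Fin n) ℝ := fun p q =>
    if q.1 = ctar p.1 (csgn p.1 * A p.2 q.2) then -|csgn p.1 * A p.2 q.2| else 0 with hB₀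
  set B : Matrix (Fin (4 * n)) (Fin (4 * n)) ℝ := fun k l => B₀ (e.symm k) (e.symm l) with hB
  set T : (Fin n → ℝ) →ₗ[ℝ] (Fin (4 * n) → ℝ) :=
    { toFun := fun x k => csgn (e.symm k).1 * x (e.symm k).2
      map_add' := by intro x y; funext k; simp [mul_add]
      map_smul' := by intro c x; funext k; simp [smul_eq_mul]; ring } with hT
  refine ⟨4 * n, B, T, ?_, ?_, ?_, ?_⟩
  · intro i j _
    simp only [hB, hB₀]
    split_ifs <;> simp [neg_nonpos, abs_nonneg] <;> positivity
  · intro i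
    simp only [hB, hB₀]
    rw [if_neg]
    exact (ctar_ne _ _).symm
  · intro x y hxy
    funext i
    have h := congrFun hxy (e (0, i))
    simpa [hT, csgn] using h
  · intro x hx t
    -- algebraic identity : T (A.mulVec v) = B.mulVec (T v)
    have hkey : ∀ v : Fin n → ℝ, B.mulVec (T v) = T (A.mulVec v) := by
      intro v
      funext k
      obtain ⟨⟨c, i⟩, rfl⟩ := e.surjective k
      show ∑ l, B (e (c, i)) l * (T v) l = _
      rw [← Equiv.sum_comp e (fun l => B (e (c,i)) l * (T v) l)]
      simp only [hB, hT, LinearMap.coe_mk, AddHom.coe_mk, Equiv.symm_apply_apply]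
      rw [Fintype.sum_prod_type_right]
      have : ∀ j : Fin n,
          (∑ d : Fin 4, B₀ (c, i) (d, j) * (csgn d * v j))
            = csgn c * A i j * v j := by
        intro j
        simp only [hB₀]
        rw [Finset.sum_congr rfl (fun d _ => by
          rw [ite_mul, zero_mul])]
        rw [Finset.sum_ite_eq' Finset.univ (ctar c (csgn c * A i j))
          (fun d => -|csgn c * A i j| * (csgn d * v j))]
        simp only [Finset.mem_univ, if_true]
        rw [← mul_assoc, key]
      rw [Finset.sum_congr rfl (fun j _ => this j)]
      show _ = csgn c * (A.mulVec v) i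
      simp only [Matrix.mulVec, dotProduct, Finset.mul_sum]
      exact Finset.sum_congr rfl (fun j _ => by ring)
    rw [hkey (x t)]
    -- derivative of T ∘ x
    have hTc : HasFDerivAt (fun v : Fin n → ℝ => T v)
        (LinearMap.toContinuousLinearMap T) (x t) :=
      (LinearMap.toContinuousLinearMap T).hasFDerivAt
    have h2 := hTc.comp_hasDerivAt t (hx t)
    exact h2
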